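/- Let δ > 0 and F₂ as above. Then the map s ↦ F₂'(s)/s is nondecreasing on (0, ∞) and strictly increasing on (δ, ∞). -/

import Mathlib

noncomputable def F₂' (δ : ℝ) (s : ℝ) : ℝ :=
  if |s| < δ then 0
  else s * Real.log (s^2 / δ^2) + 2 * δ * Real.sign s - 2 * s

noncomputable def Haux (δ : ℝ) (s : ℝ) : ℝ :=
  2 * Real.log s - 2 * Real.log δ + 2 * δ / s - 2

lemma Haux_strictMono (δ : ℝ) (hδ : 0 < δ) : StrictMonoOn (Haux δ) (Set.Ici δ) := by
  apply strictMonoOn_of_deriv_pos (convex_Ici δ)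
  · apply ContinuousOn.sub
    apply ContinuousOn.add
    · apply ContinuousOn.sub
      · exact continuousOn_const.mul (Real.continuousOn_log.mono (fun x hx =>
          ne_of_gt (lt_of_lt_of_le hδ hx)))
      · exact continuousOn_const
    · apply ContinuousOn.div continuousOn_const continuousOn_id
      intro x hx; simp only [Set.mem_Ici] at hx; simp; linarith
    · exact continuousOn_const
  · intro x hx
    rw [interior_Ici] at hx
    simp only [Set.mem_Ioi] at hx
    have hx0 : (0:ℝ) < x := lt_trans hδ hx
    have h1 : HasDerivAt (Haux δ) (2 * x⁻¹ - (2*δ) * (x^2)⁻¹) x := by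
      have hlog : HasDerivAt (fun s => 2 * Real.log s) (2 * x⁻¹) x :=
        (Real.hasDerivAt_log (ne_of_gt hx0)).const_mul 2
      have hinv : HasDerivAt (fun s : ℝ => 2 * δ / s) ((2*δ) * (-(x^2)⁻¹)) x := by
        simpa [div_eq_mul_inv] using (hasDerivAt_inv (ne_of_gt hx0)).const_mul (2*δ)
      have := ((hlog.sub_const (2 * Real.log δ)).add hinv).sub_const 2
      exact this.congr_deriv (by ring)
    rw [h1.deriv]
    have : 2 * x⁻¹ - 2 * δ * (x ^ 2)⁻¹ = 2 * (x - δ) / x^2 := by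
      field_simp
    rw [this]
    apply div_pos (by linarith) (by positivity)

lemma Haux_nonneg (δ : ℝ) (hδ : 0 < δ) {s : ℝ} (hs : δ ≤ s) : 0 ≤ Haux δ s := by
  have h0 : Haux δ δ = 0 := by
    unfold Haux
    field_simp
    ring
  rcases eq_or_lt_of_le hs with h | h
  · rw [← h, h0]
  · rw [← h0]
    exact le_of_lt ((Haux_strictMono δ hδ) (Set.self_mem_Ici) hs h)

lemma F₂'_eq (δ : ℝ) (hδ : 0 < δ) {s : ℝ} (hs : δ ≤ s) :
    F₂' δ s / s = Haux δ s := by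
  have hs0 : 0 < s := lt_of_lt_of_le hδ hs
  have habs : ¬ |s| < δ := by
    rw [abs_of_pos hs0]; linarith
  have hsign : Real.sign s = 1 := Real.sign_of_pos hs0
  have hlog : Real.log (s^2 / δ^2) = 2 * Real.log s - 2 * Real.log δ := by
    rw [Real.log_div (by positivity) (by positivity), Real.log_pow, Real.log_pow]
    push_cast; ring
  rw [F₂', if_neg habs, hsign, hlog, Haux]
  field_simp

theorem stmt_6 (δ : ℝ) (hδ : 0 < δ) :
    MonotoneOn (fun s => F₂' δ s / s) (Set.Ioi (0:ℝ)) ∧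
      StrictMonoOn (fun s => F₂' δ s / s) (Set.Ioi δ) := by
  constructor
  · intro a ha b hb hab
    simp only [Set.mem_Ioi] at ha hb
    by_cases hbδ : b < δ
    · have haδ : a < δ := lt_of_le_of_lt hab hbδ
      have h1 : |a| < δ := by rwa [abs_of_pos ha]
      have h2 : |b| < δ := by rwa [abs_of_pos hb]
      simp only [F₂', if_pos h1, if_pos h2, le_refl, zero_div]
    · push_neg at hbδ
      by_cases haδ : a < δ
      · have h1 : |a| < δ := by rwa [abs_of_pos ha]
        simp only
        rw [F₂'_eq δ hδ hbδ]
        simp only [F₂', if_pos h1, zero_div]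
        exact Haux_nonneg δ hδ hbδ
      · push_neg at haδ
        simp only
        rw [F₂'_eq δ hδ haδ, F₂'_eq δ hδ hbδ]
        exact (Haux_strictMono δ hδ).monotoneOn haδ hbδ hab
  · intro a ha b hb hab
    simp only [Set.mem_Ioi] at ha hb
    simp only
    rw [F₂'_eq δ hδ (le_of_lt ha), F₂'_eq δ hδ (le_of_lt hb)]
    exact (Haux_strictMono δ hδ) (le_of_lt ha) (le_of_lt hb) hab
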